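/- Let 𝕊 and X be measurable spaces, g : X → 𝕊, ψ⁰, ψ¹ : 𝕊 → ℝ^d, and c : X × {0,1} → ℝ measurable, and fix γ ∈ (0,1]. Write ψ(s,u) = u ψ¹(s) + (1−u) ψ⁰(s), and for z = (u, x, x⁺) ∈ {0,1} × X × X, with s = g(x) and s⁺ = g(x⁺), define f(θ, z) := ψ(s,u) [ −θᵀψ(s,u) + c(x,u) + γ(1−u) min{ θᵀψ⁰(s⁺), θᵀψ¹(s⁺) } ] for θ ∈ ℝ^d. Then there exists a constant K ≥ 1 such that, with ℓ_ψ(x) := ‖ψ¹(g(x))‖ + ‖ψ⁰(g(x))‖ and L(z) := K ℓ_ψ(x)² + c(x,u)² + ℓ_ψ(x⁺)², the following hold for every z and every θ, θ' ∈ ℝ^d: ‖f(0, z)‖ ≤ L(z) and ‖f(θ, z) − f(θ', z)‖ ≤ L(z) ‖θ − θ'‖. -/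

import Mathlib

lemma qlip_aux {d : ℕ} (w w0 w1 : EuclideanSpace ℝ (Fin d)) (β cc ℓx ℓp : ℝ)
    (hw : ‖w‖ ≤ ℓx) (hw0 : ‖w0‖ ≤ ℓp) (hw1 : ‖w1‖ ≤ ℓp)
    (hβ0 : 0 ≤ β) (hβ1 : β ≤ 1) (θ θ' : EuclideanSpace ℝ (Fin d)) :
    ‖((-(inner ℝ θ w : ℝ) + cc + β * min ((inner ℝ θ w0 : ℝ)) ((inner ℝ θ w1 : ℝ))) • w)
      - ((-(inner ℝ θ' w : ℝ) + cc + β * min ((inner ℝ θ' w0 : ℝ)) ((inner ℝ θ' w1 : ℝ))) • w)‖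
      ≤ (2 * ℓx ^ 2 + cc ^ 2 + ℓp ^ 2) * ‖θ - θ'‖ := by
  have hℓx : (0:ℝ) ≤ ℓx := (norm_nonneg w).trans hw
  have hℓp : (0:ℝ) ≤ ℓp := (norm_nonneg w0).trans hw0
  set a := (-(inner ℝ θ w : ℝ) + cc + β * min ((inner ℝ θ w0 : ℝ)) ((inner ℝ θ w1 : ℝ)))
  set a' := (-(inner ℝ θ' w : ℝ) + cc + β * min ((inner ℝ θ' w0 : ℝ)) ((inner ℝ θ' w1 : ℝ)))
  have key : |a - a'| ≤ ‖θ - θ'‖ * ℓx + ‖θ - θ'‖ * ℓp := by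
    have h1 : |(inner ℝ θ w : ℝ) - inner ℝ θ' w| ≤ ‖θ - θ'‖ * ℓx := by
      rw [← inner_sub_left]
      calc |(inner ℝ (θ - θ') w : ℝ)| ≤ ‖θ - θ'‖ * ‖w‖ := abs_real_inner_le_norm _ _
        _ ≤ ‖θ - θ'‖ * ℓx := by gcongr
    have hm : |min ((inner ℝ θ w0 : ℝ)) ((inner ℝ θ w1 : ℝ))
        - min ((inner ℝ θ' w0 : ℝ)) ((inner ℝ θ' w1 : ℝ))| ≤ ‖θ - θ'‖ * ℓp := by
      refine (abs_min_sub_min_le_max _ _ _ _).trans (max_le ?_ ?_)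
      · rw [← inner_sub_left]
        calc |(inner ℝ (θ - θ') w0 : ℝ)| ≤ ‖θ - θ'‖ * ‖w0‖ := abs_real_inner_le_norm _ _
          _ ≤ ‖θ - θ'‖ * ℓp := by gcongr
      · rw [← inner_sub_left]
        calc |(inner ℝ (θ - θ') w1 : ℝ)| ≤ ‖θ - θ'‖ * ‖w1‖ := abs_real_inner_le_norm _ _
          _ ≤ ‖θ - θ'‖ * ℓp := by gcongr
    have : a - a' = -((inner ℝ θ w : ℝ) - inner ℝ θ' w)
        + β * (min ((inner ℝ θ w0 : ℝ)) ((inner ℝ θ w1 : ℝ))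
          - min ((inner ℝ θ' w0 : ℝ)) ((inner ℝ θ' w1 : ℝ))) := by
      simp only [a, a']; ring
    set A : ℝ := (inner ℝ θ w : ℝ) - inner ℝ θ' w with hA
    set M : ℝ := min ((inner ℝ θ w0 : ℝ)) ((inner ℝ θ w1 : ℝ))
      - min ((inner ℝ θ' w0 : ℝ)) ((inner ℝ θ' w1 : ℝ)) with hM
    rw [this]
    calc |(-A + β * M)| ≤ |(-A)| + |β * M| := abs_add_le _ _
      _ = |A| + β * |M| := by rw [abs_neg, abs_mul, abs_of_nonneg hβ0]
      _ ≤ ‖θ - θ'‖ * ℓx + 1 * (‖θ - θ'‖ * ℓp) := by gcongr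
      _ = ‖θ - θ'‖ * ℓx + ‖θ - θ'‖ * ℓp := by ring
  rw [← sub_smul, norm_smul, Real.norm_eq_abs]
  calc |a - a'| * ‖w‖ ≤ (‖θ - θ'‖ * ℓx + ‖θ - θ'‖ * ℓp) * ℓx := by
        exact mul_le_mul key hw (norm_nonneg w) (by positivity)
    _ ≤ (2 * ℓx ^ 2 + cc ^ 2 + ℓp ^ 2) * ‖θ - θ'‖ := by
        nlinarith [norm_nonneg (θ - θ'), sq_nonneg cc, sq_nonneg (ℓx - ℓp),
          mul_nonneg (norm_nonneg (θ - θ')) hℓx]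



/-- Lemma `QLip`: the Q-learning update direction `f(θ, z)` for
partially observed optimal stopping satisfies the Lipschitz bound (SA2) with
coefficient `L(z) = K ℓ_ψ(x)² + c(x,u)² + ℓ_ψ(x⁺)²`. -/
theorem stmt_12
    {𝕊 X : Type*} [MeasurableSpace 𝕊] [MeasurableSpace X] {d : ℕ}
    (g : X → 𝕊) (hg : Measurable g)
    (ψ0 ψ1 : 𝕊 → EuclideanSpace ℝ (Fin d))
    (hψ0 : Measurable ψ0) (hψ1 : Measurable ψ1)
    (c : X → ℝ → ℝ) (hc : Measurable fun p : X × ℝ => c p.1 p.2)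
    (γ : ℝ) (hγ : 0 < γ) (hγ1 : γ ≤ 1)
    (ψ : 𝕊 → ℝ → EuclideanSpace ℝ (Fin d))
    (hψ : ∀ s u, ψ s u = u • ψ1 s + (1 - u) • ψ0 s)
    (f : EuclideanSpace ℝ (Fin d) → ℝ → X → X → EuclideanSpace ℝ (Fin d))
    (hf : ∀ θ u x xp, f θ u x xp =
      (-(inner ℝ θ (ψ (g x) u) : ℝ) + c x u
        + γ * (1 - u) * min ((inner ℝ θ (ψ0 (g xp)) : ℝ)) ((inner ℝ θ (ψ1 (g xp)) : ℝ)))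
        • ψ (g x) u) :
    ∃ K : ℝ, 1 ≤ K ∧
      ∀ u ∈ ({0, 1} : Set ℝ), ∀ (x xp : X) (θ θ' : EuclideanSpace ℝ (Fin d)),
        ‖f 0 u x xp‖ ≤
          K * (‖ψ1 (g x)‖ + ‖ψ0 (g x)‖) ^ 2 + (c x u) ^ 2
            + (‖ψ1 (g xp)‖ + ‖ψ0 (g xp)‖) ^ 2 ∧
        ‖f θ u x xp - f θ' u x xp‖ ≤
          (K * (‖ψ1 (g x)‖ + ‖ψ0 (g x)‖) ^ 2 + (c x u) ^ 2
            + (‖ψ1 (g xp)‖ + ‖ψ0 (g xp)‖) ^ 2) * ‖θ - θ'‖ := by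
  refine ⟨2, one_le_two, ?_⟩
  intro u hu x xp θ θ'
  have hu' : u = 0 ∨ u = 1 := by simpa using hu
  set ℓx := ‖ψ1 (g x)‖ + ‖ψ0 (g x)‖ with hℓx
  set ℓp := ‖ψ1 (g xp)‖ + ‖ψ0 (g xp)‖ with hℓp
  have hw : ‖ψ (g x) u‖ ≤ ℓx := by
    rcases hu' with rfl | rfl
    · rw [hψ]; simp [hℓx]
    · rw [hψ]; simp [hℓx]
  have hw0 : ‖ψ0 (g xp)‖ ≤ ℓp := le_add_of_nonneg_left (norm_nonneg _)
  have hw1 : ‖ψ1 (g xp)‖ ≤ ℓp := le_add_of_nonneg_right (norm_nonneg _)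
  have hβ0 : 0 ≤ γ * (1 - u) := by
    rcases hu' with rfl | rfl <;> simp [hγ.le]
  have hβ1 : γ * (1 - u) ≤ 1 := by
    rcases hu' with rfl | rfl <;> simp [hγ1]
  constructor
  · have hfz : f 0 u x xp = (c x u) • ψ (g x) u := by
      rw [hf]; simp
    rw [hfz, norm_smul, Real.norm_eq_abs]
    have h1 : |c x u| * ‖ψ (g x) u‖ ≤ |c x u| * ℓx :=
      mul_le_mul_of_nonneg_left hw (abs_nonneg _)
    have hℓx0 : (0:ℝ) ≤ ℓx := (norm_nonneg _).trans hw
    have hℓp0 : (0:ℝ) ≤ ℓp := (norm_nonneg _).trans hw0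
    nlinarith [sq_nonneg (|c x u| - ℓx), sq_abs (c x u), abs_nonneg (c x u)]
  · rw [hf, hf]
    exact qlip_aux _ _ _ _ _ _ _ hw hw0 hw1 hβ0 hβ1 θ θ'
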